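/- arXiv:1901.01090 — 4 statements merged into one kernel-verified Lean document; each statement's English description precedes it below -/
import Mathlib

section
/- For every simple graph G and all d, d' ≥ 1, the iterated fractionalization (G/d')/d is homomorphically equivalent to G/(d·d'), i.e., there exist graph homomorphisms in both directions between (G/d')/d and G/(d·d'). -/
open SimpleGraph

universe u v

/-- The join `G + H` of two simple graphs. -/
def graphJoin {α : Type u} {β : Type v} (G : SimpleGraph α) (H : SimpleGraph β) :
    SimpleGraph (α ⊕ β) where
  Adj x y :=
    match x, y with
    | Sum.inl a, Sum.inl a' => G.Adj a a'
    | Sum.inr b, Sum.inr b' => H.Adj b b'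
    | Sum.inl _, Sum.inr _ => True
    | Sum.inr _, Sum.inl _ => True
  symm := by
    constructor
    rintro (a | b) (a' | b') h
    · exact G.adj_symm h
    · trivial
    · trivial
    · exact H.adj_symm h
  loopless := by
    constructor
    rintro (a | b) h
    · exact G.loopless.irrefl a h
    · exact H.loopless.irrefl b h

/-- The disjunctive product `G * H`. -/
def disjProd {α : Type u} {β : Type v} (G : SimpleGraph α) (H : SimpleGraph β) :
    SimpleGraph (α × β) where
  Adj p q := G.Adj p.1 q.1 ∨ H.Adj p.2 q.2
  symm := ⟨fun p q h => h.imp (fun h' => G.adj_symm h') (fun h' => H.adj_symm h')⟩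
  loopless := ⟨fun p h => h.elim (fun h' => G.loopless.irrefl p.1 h') (fun h' => H.loopless.irrefl p.2 h')⟩

/-- The lexicographic product `G ⋉ H`. -/
def lexProd {α : Type u} {β : Type v} (G : SimpleGraph α) (H : SimpleGraph β) :
    SimpleGraph (α × β) where
  Adj p q := G.Adj p.1 q.1 ∨ (p.1 = q.1 ∧ H.Adj p.2 q.2)
  symm := ⟨fun p q h => h.imp (fun h' => G.adj_symm h') (fun h' => ⟨h'.1.symm, H.adj_symm h'.2⟩)⟩
  loopless := ⟨fun p h => h.elim (fun h' => G.loopless.irrefl p.1 h') (fun h' => H.loopless.irrefl p.2 h'.2)⟩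

/-- The `d`-fold blowup `G ⋉ d`, i.e. the lexicographic product `G ⋉ K_d`. -/
def blowup {α : Type u} (G : SimpleGraph α) (d : ℕ) : SimpleGraph (α × Fin d) :=
  lexProd G (⊤ : SimpleGraph (Fin d))

/-- The `d`-fractionalization `G/d`: the graph of `d`-cliques of `G`, with two
`d`-cliques adjacent iff they are disjoint and pairwise adjacent. -/
def fracGraph {α : Type u} (G : SimpleGraph α) (d : ℕ) :
    SimpleGraph {S : Finset α // S.card = d ∧ G.IsClique (S : Set α)} where
  Adj S T := S ≠ T ∧ Disjoint S.val T.val ∧ ∀ a ∈ S.val, ∀ b ∈ T.val, G.Adj a b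
  symm := by
    constructor
    rintro S T ⟨hne, hd, hadj⟩
    exact ⟨hne.symm, hd.symm, fun b hb a ha => (hadj a ha b hb).symm⟩
  loopless := ⟨fun S h => h.1 rfl⟩

/-- The `n`-fold disjunctive power `G^{*n}`. -/
def disjPow {α : Type u} (G : SimpleGraph α) (n : ℕ) :
    SimpleGraph (Fin n → α) where
  Adj f g := ∃ i, G.Adj (f i) (g i)
  symm := ⟨fun f g ⟨i, h⟩ => ⟨i, h.symm⟩⟩
  loopless := ⟨fun f ⟨i, h⟩ => G.loopless.irrefl _ h⟩

/-- A semiring family of graphs. -/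
structure SemiringFamily where
  V : ℕ → Type u
  F : ∀ n, SimpleGraph (V n)
  isEmpty_zero : IsEmpty (V 0)
  nonempty_one : Nonempty (V 1)
  add_hom : ∀ n m : ℕ, Nonempty (graphJoin (F n) (F m) →g F (n + m))
  mul_hom : ∀ n m : ℕ, Nonempty (disjProd (F n) (F m) →g F (n * m))

/-- The `F`-number: the least `n` such that `G → F_n`. -/
noncomputable def etaF (F : SemiringFamily.{u}) {α : Type v} (G : SimpleGraph α) : ℕ :=
  sInf {n : ℕ | Nonempty (G →g F.F n)}

/-- The fractional `F`-number. -/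
noncomputable def etaFrac (F : SemiringFamily.{u}) {α : Type v} (G : SimpleGraph α) : ℝ :=
  sInf {x : ℝ | ∃ n d : ℕ, 1 ≤ d ∧ Nonempty (G →g fracGraph (F.F n) d) ∧ x = (n : ℝ) / d}

/-- The asymptotic `F`-number. -/
noncomputable def etaAsymp (F : SemiringFamily.{u}) {α : Type v} (G : SimpleGraph α) : ℝ :=
  sInf {x : ℝ | ∃ n : ℕ, 1 ≤ n ∧ x = (etaF F (disjPow G n) : ℝ) ^ ((1 : ℝ) / n)}

/-- The orthogonal complement of a set of vertices. -/
def perp {α : Type u} (G : SimpleGraph α) (S : Set α) : Set α :=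
  {v | ∀ s ∈ S, G.Adj v s}

/-- A flat is a set of vertices with `S^{⊥⊥} = S`. -/
def IsFlat {α : Type u} (G : SimpleGraph α) (S : Set α) : Prop :=
  perp G (perp G S) = S

/-- Homomorphic equivalence of two graphs. -/
def HomEquiv {α : Type u} {β : Type v} (G : SimpleGraph α) (H : SimpleGraph β) : Prop :=
  Nonempty (G →g H) ∧ Nonempty (H →g G)

/-- A linear-like semiring family: every flat of `F_n` induces a subgraph with some
clique number `k`, homomorphically equivalent to `F_k`. -/
structure LinearLikeFamily extends SemiringFamily where
  linearLike : ∀ n (S : Set (V n)), IsFlat (F n) S →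
    ∃ k : ℕ, (∃ s : Finset S, ((F n).induce S).IsNClique k s) ∧
      (∀ s : Finset S, ¬ ((F n).induce S).IsNClique (k + 1) s) ∧
      HomEquiv ((F n).induce S) (F k)

section AuxFrac

variable {α : Type u}

/-- Vertex type of the `d`-fractionalization. -/
abbrev FracV (G : SimpleGraph α) (d : ℕ) : Type u :=
  {S : Finset α // S.card = d ∧ G.IsClique (S : Set α)}

lemma fracGraph_adj {G : SimpleGraph α} {d : ℕ} {S T : FracV G d} :
    (fracGraph G d).Adj S T ↔
      S ≠ T ∧ Disjoint S.val T.val ∧ ∀ a ∈ S.val, ∀ b ∈ T.val, G.Adj a b :=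
  Iff.rfl

open Classical in
/-- The union of a `d`-clique of `d'`-cliques. -/
noncomputable def unionSet (G : SimpleGraph α) (d' : ℕ)
    (S : Finset (FracV G d')) : Finset α :=
  S.biUnion (fun A => A.val)

lemma mem_unionSet {G : SimpleGraph α} {d' : ℕ} {S : Finset (FracV G d')} {a : α} :
    a ∈ unionSet G d' S ↔ ∃ A ∈ S, a ∈ A.val := by
  classical
  simp [unionSet]

lemma unionSet_card {G : SimpleGraph α} {d d' : ℕ} {S : Finset (FracV G d')}
    (hcard : S.card = d) (hclique : (fracGraph G d').IsClique (S : Set (FracV G d'))) :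
    (unionSet G d' S).card = d * d' := by
  classical
  rw [unionSet, Finset.card_biUnion]
  · rw [Finset.sum_congr rfl (fun A _ => A.prop.1), Finset.sum_const, hcard, smul_eq_mul]
  · intro A hA B hB hne
    exact (hclique (Finset.mem_coe.2 hA) (Finset.mem_coe.2 hB) hne).2.1

lemma unionSet_clique {G : SimpleGraph α} {d' : ℕ} {S : Finset (FracV G d')}
    (hclique : (fracGraph G d').IsClique (S : Set (FracV G d'))) :
    G.IsClique ((unionSet G d' S : Finset α) : Set α) := by
  intro a ha b hb hab
  obtain ⟨A, hA, haA⟩ := mem_unionSet.1 (Finset.mem_coe.1 ha)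
  obtain ⟨B, hB, hbB⟩ := mem_unionSet.1 (Finset.mem_coe.1 hb)
  by_cases hAB : A = B
  · subst hAB
    exact A.prop.2 (Finset.mem_coe.2 haA) (Finset.mem_coe.2 hbB) hab
  · exact (hclique (Finset.mem_coe.2 hA) (Finset.mem_coe.2 hB) hAB).2.2 a haA b hbB

lemma hom_union (G : SimpleGraph α) (d d' : ℕ) (hd : 1 ≤ d) (hd' : 1 ≤ d') :
    Nonempty (fracGraph (fracGraph G d') d →g fracGraph G (d * d')) := by
  classical
  refine ⟨⟨fun S => ⟨unionSet G d' S.val, unionSet_card S.prop.1 S.prop.2,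
    unionSet_clique S.prop.2⟩, ?_⟩⟩
  rintro S T ⟨hne, hdisj, hadj⟩
  have hdisjU : Disjoint (unionSet G d' S.val) (unionSet G d' T.val) := by
    rw [Finset.disjoint_left]
    intro a haS haT
    obtain ⟨A, hA, haA⟩ := mem_unionSet.1 haS
    obtain ⟨B, hB, haB⟩ := mem_unionSet.1 haT
    exact Finset.disjoint_left.1 (hadj A hA B hB).2.1 haA haB
  refine ⟨?_, hdisjU, ?_⟩
  · intro h
    have h' : unionSet G d' S.val = unionSet G d' T.val := congrArg Subtype.val h
    obtain ⟨a, ha⟩ : (unionSet G d' S.val).Nonempty := by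
      rw [← Finset.card_pos, unionSet_card S.prop.1 S.prop.2]
      exact Nat.mul_pos hd hd'
    exact Finset.disjoint_left.1 hdisjU ha (h' ▸ ha)
  · intro a haS b hbT
    obtain ⟨A, hA, haA⟩ := mem_unionSet.1 haS
    obtain ⟨B, hB, hbB⟩ := mem_unionSet.1 hbT
    exact (hadj A hA B hB).2.2 a haA b hbB

/-- The `i`-th part of a partition of a finset of cardinality `n * d'` into
`n` parts of size `d'`. -/
noncomputable def partSet (n d' : ℕ) (U : Finset α) (h : U.card = n * d')
    (i : Fin n) : Finset α := by
  classical
  exact Finset.univ.image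
    (fun j : Fin d' => ((U.equivFinOfCardEq h).symm (finProdFinEquiv (i, j)) : α))

lemma mem_partSet {n d' : ℕ} {U : Finset α} {h : U.card = n * d'} {i : Fin n} {a : α} :
    a ∈ partSet n d' U h i ↔
      ∃ j : Fin d', ((U.equivFinOfCardEq h).symm (finProdFinEquiv (i, j)) : α) = a := by
  classical
  simp [partSet]

lemma partSet_subset {n d' : ℕ} {U : Finset α} {h : U.card = n * d'} {i : Fin n} :
    partSet n d' U h i ⊆ U := by
  intro a ha
  obtain ⟨j, hj⟩ := mem_partSet.1 ha
  rw [← hj]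
  exact ((U.equivFinOfCardEq h).symm (finProdFinEquiv (i, j))).prop

lemma partSet_card {n d' : ℕ} {U : Finset α} {h : U.card = n * d'} {i : Fin n} :
    (partSet n d' U h i).card = d' := by
  classical
  rw [partSet, Finset.card_image_of_injective, Finset.card_univ, Fintype.card_fin]
  intro j j' hjj'
  have := (U.equivFinOfCardEq h).symm.injective (Subtype.coe_injective hjj')
  have := finProdFinEquiv.injective this
  exact (Prod.ext_iff.1 this).2

lemma partSet_disjoint {n d' : ℕ} {U : Finset α} {h : U.card = n * d'} {i i' : Fin n}
    (hne : i ≠ i') : Disjoint (partSet n d' U h i) (partSet n d' U h i') := by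
  rw [Finset.disjoint_left]
  intro a ha ha'
  obtain ⟨j, hj⟩ := mem_partSet.1 ha
  obtain ⟨j', hj'⟩ := mem_partSet.1 ha'
  have := (U.equivFinOfCardEq h).symm.injective (Subtype.coe_injective (hj.trans hj'.symm))
  have := finProdFinEquiv.injective this
  exact hne (Prod.ext_iff.1 this).1

lemma partSet_nonempty {n d' : ℕ} (hd' : 1 ≤ d') {U : Finset α} {h : U.card = n * d'}
    {i : Fin n} : (partSet n d' U h i).Nonempty := by
  refine ⟨((U.equivFinOfCardEq h).symm (finProdFinEquiv (i, ⟨0, hd'⟩)) : α), ?_⟩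
  exact mem_partSet.2 ⟨⟨0, hd'⟩, rfl⟩

/-- The `i`-th part as a vertex of `G/d'`. -/
noncomputable def partV (G : SimpleGraph α) (n d' : ℕ) (U : FracV G (n * d'))
    (i : Fin n) : FracV G d' :=
  ⟨partSet n d' U.val U.prop.1 i, partSet_card,
    U.prop.2.subset (fun a ha => Finset.mem_coe.2 (partSet_subset (Finset.mem_coe.1 ha)))⟩

open Classical in
/-- The set of parts as a vertex of `(G/d')/d`. -/
noncomputable def partsFinset (G : SimpleGraph α) (n d' : ℕ) (U : FracV G (n * d')) :
    Finset (FracV G d') :=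
  Finset.univ.image (partV G n d' U)

lemma mem_partsFinset {G : SimpleGraph α} {n d' : ℕ} {U : FracV G (n * d')}
    {A : FracV G d'} : A ∈ partsFinset G n d' U ↔ ∃ i, partV G n d' U i = A := by
  classical
  simp [partsFinset]

lemma partV_injective {G : SimpleGraph α} {n d' : ℕ} (hd' : 1 ≤ d')
    {U : FracV G (n * d')} : Function.Injective (partV G n d' U) := by
  intro i i' hii'
  by_contra hne
  have hdisj := partSet_disjoint (i := i) (i' := i') (h := U.prop.1) hne
  have heq : partSet n d' U.val U.prop.1 i = partSet n d' U.val U.prop.1 i' :=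
    congrArg Subtype.val hii'
  obtain ⟨a, ha⟩ := partSet_nonempty hd' (h := U.prop.1) (i := i)
  exact Finset.disjoint_left.1 hdisj ha (heq ▸ ha)

lemma partsFinset_card {G : SimpleGraph α} {n d' : ℕ} (hd' : 1 ≤ d')
    {U : FracV G (n * d')} : (partsFinset G n d' U).card = n := by
  classical
  rw [partsFinset, Finset.card_image_of_injective _ (partV_injective hd'),
    Finset.card_univ, Fintype.card_fin]

lemma partV_subset {G : SimpleGraph α} {n d' : ℕ} {U : FracV G (n * d')} {i : Fin n} :
    (partV G n d' U i).val ⊆ U.val := partSet_subset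

lemma parts_adj {G : SimpleGraph α} {n d' : ℕ} {U U' : FracV G (n * d')} (hd' : 1 ≤ d')
    {A B : FracV G d'} (hA : A ∈ partsFinset G n d' U) (hB : B ∈ partsFinset G n d' U')
    (hdisj : Disjoint U.val U'.val) (hadj : ∀ a ∈ U.val, ∀ b ∈ U'.val, G.Adj a b) :
    (fracGraph G d').Adj A B := by
  obtain ⟨i, rfl⟩ := mem_partsFinset.1 hA
  obtain ⟨i', rfl⟩ := mem_partsFinset.1 hB
  have hdAB : Disjoint (partV G n d' U i).val (partV G n d' U' i').val :=
    hdisj.mono partV_subset partV_subset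
  refine ⟨?_, hdAB, fun a ha b hb => hadj a (partV_subset ha) b (partV_subset hb)⟩
  intro hEq
  have heq : (partV G n d' U i).val = (partV G n d' U' i').val := congrArg Subtype.val hEq
  obtain ⟨a, ha⟩ := partSet_nonempty hd' (h := U.prop.1) (i := i)
  have ha' : a ∈ (partV G n d' U i).val := ha
  exact Finset.disjoint_left.1 hdisj (partV_subset ha') (partV_subset (heq ▸ ha'))

lemma partsFinset_clique {G : SimpleGraph α} {n d' : ℕ} (hd' : 1 ≤ d')
    {U : FracV G (n * d')} :
    (fracGraph G d').IsClique ((partsFinset G n d' U : Finset (FracV G d')) : Set (FracV G d')) := by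
  intro A hA B hB hAB
  obtain ⟨i, rfl⟩ := mem_partsFinset.1 (Finset.mem_coe.1 hA)
  obtain ⟨i', rfl⟩ := mem_partsFinset.1 (Finset.mem_coe.1 hB)
  have hii' : i ≠ i' := fun h => hAB (congrArg _ h)
  have hdAB : Disjoint (partV G n d' U i).val (partV G n d' U i').val :=
    partSet_disjoint hii'
  refine ⟨hAB, hdAB, fun a ha b hb => ?_⟩
  have hab : a ≠ b := fun h => Finset.disjoint_left.1 hdAB ha (h ▸ hb)
  exact U.prop.2 (Finset.mem_coe.2 (partV_subset ha)) (Finset.mem_coe.2 (partV_subset hb)) hab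

lemma hom_parts (G : SimpleGraph α) (d d' : ℕ) (hd : 1 ≤ d) (hd' : 1 ≤ d') :
    Nonempty (fracGraph G (d * d') →g fracGraph (fracGraph G d') d) := by
  classical
  refine ⟨⟨fun U => ⟨partsFinset G d d' U, partsFinset_card hd', partsFinset_clique hd'⟩, ?_⟩⟩
  rintro U U' ⟨hne, hdisj, hadj⟩
  have hdisjP : Disjoint (partsFinset G d d' U) (partsFinset G d d' U') := by
    rw [Finset.disjoint_left]
    intro A hAU hAU'
    obtain ⟨i, hi⟩ := mem_partsFinset.1 hAU
    obtain ⟨i', hi'⟩ := mem_partsFinset.1 hAU'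
    have hsub : (partV G d d' U i).val ⊆ U'.val := by
      rw [hi, ← hi']; exact partV_subset
    obtain ⟨a, ha⟩ := partSet_nonempty hd' (h := U.prop.1) (i := i)
    exact Finset.disjoint_left.1 hdisj (partV_subset ha) (hsub ha)
  refine ⟨?_, hdisjP, fun A hA B hB => parts_adj hd' hA hB hdisj hadj⟩
  intro h
  have h' : partsFinset G d d' U = partsFinset G d d' U' := congrArg Subtype.val h
  obtain ⟨A, hA⟩ : (partsFinset G d d' U).Nonempty := by
    rw [← Finset.card_pos, partsFinset_card hd']
    exact hd
  exact Finset.disjoint_left.1 hdisjP hA (h' ▸ hA)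

end AuxFrac

/-- Iterated fractionalization `(G/d')/d` is homomorphically equivalent to `G/(d·d')`. -/
theorem fracGraph_fracGraph_homEquiv {α : Type u} (G : SimpleGraph α) (d d' : ℕ)
    (hd : 1 ≤ d) (hd' : 1 ≤ d') :
    HomEquiv (fracGraph (fracGraph G d') d) (fracGraph G (d * d')) :=
  ⟨hom_union G d d' hd hd', hom_parts G d d' hd hd'⟩
end

section
/- Let (F_n) be a semiring family of graphs. Then for all n, d, m ≥ 1 there exists a graph homomorphism F_n/d → F_{m·n}/(m·d) ('common denominators' can be taken). -/
open SimpleGraph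

universe u v

open scoped Classical in
/-- A graph hom induces a hom of fractionalizations. -/
noncomputable def fracMap {α : Type u} {β : Type v} {G : SimpleGraph α} {H : SimpleGraph β}
    (f : G →g H) (d : ℕ) (hd : 1 ≤ d) : fracGraph G d →g fracGraph H d where
  toFun S := ⟨S.val.image f, by
    refine ⟨?_, ?_⟩
    · rw [Finset.card_image_of_injOn, S.2.1]
      intro x hx y hy hfe
      by_contra hne
      exact H.loopless.irrefl _ (hfe ▸ f.map_adj (S.2.2 hx hy hne))
    · rintro x hx y hy hne
      simp only [Finset.coe_image, Set.mem_image, Finset.mem_coe] at hx hy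
      obtain ⟨p, hp, rfl⟩ := hx
      obtain ⟨q, hq, rfl⟩ := hy
      have hpq : p ≠ q := fun h => hne (by rw [h])
      exact f.map_adj (S.2.2 (Finset.mem_coe.mpr hp) (Finset.mem_coe.mpr hq) hpq)⟩
  map_rel' := by
    rintro S T ⟨hne, hdisj, hadj⟩
    have hdisj' : Disjoint (S.val.image f) (T.val.image f) := by
      rw [Finset.disjoint_left]
      rintro x hx hx'
      simp only [Finset.mem_image] at hx hx'
      obtain ⟨p, hp, rfl⟩ := hx
      obtain ⟨q, hq, hqe⟩ := hx'
      exact H.loopless.irrefl _ (hqe ▸ f.map_adj (hadj p hp q hq))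
    refine ⟨?_, hdisj', ?_⟩
    · intro h
      have hval : S.val.image f = T.val.image f := congrArg Subtype.val h
      have hne' : (S.val.image f).Nonempty := by
        rw [Finset.image_nonempty, ← Finset.card_pos, S.2.1]
        exact hd
      rw [hval] at hdisj' hne'
      exact hne'.ne_empty (by rwa [disjoint_self, Finset.bot_eq_empty] at hdisj')
    · rintro x hx y hy
      simp only [Finset.mem_image] at hx hy
      obtain ⟨p, hp, rfl⟩ := hx
      obtain ⟨q, hq, rfl⟩ := hy
      exact f.map_adj (hadj p hp q hq)

open scoped Classical in
/-- Combining a fractionalization hom with a join. -/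
noncomputable def fracJoinMap {α : Type u} {β : Type v} {G : SimpleGraph α} {H : SimpleGraph β}
    {a b : ℕ} (ha : 1 ≤ a) (φ : fracGraph G a →g fracGraph H b) :
    fracGraph G a →g fracGraph (graphJoin H G) (b + a) where
  toFun S := ⟨((φ S).val.image Sum.inl) ∪ (S.val.image Sum.inr), by
    refine ⟨?_, ?_⟩
    · rw [Finset.card_union_of_disjoint, Finset.card_image_of_injective _ Sum.inl_injective,
        Finset.card_image_of_injective _ Sum.inr_injective, (φ S).2.1, S.2.1]
      rw [Finset.disjoint_left]
      rintro x hx hx'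
      simp only [Finset.mem_image] at hx hx'
      obtain ⟨p, hp, rfl⟩ := hx
      obtain ⟨q, hq, h⟩ := hx'
      exact Sum.inr_ne_inl h
    · rintro x hx y hy hne
      simp only [Finset.coe_union, Set.mem_union, Finset.coe_image, Set.mem_image,
        Finset.mem_coe] at hx hy
      rcases hx with ⟨p, hp, rfl⟩ | ⟨p, hp, rfl⟩ <;> rcases hy with ⟨q, hq, rfl⟩ | ⟨q, hq, rfl⟩
      · exact (φ S).2.2 (Finset.mem_coe.mpr hp) (Finset.mem_coe.mpr hq)
          (fun h => hne (by rw [h]))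
      · trivial
      · trivial
      · exact S.2.2 (Finset.mem_coe.mpr hp) (Finset.mem_coe.mpr hq)
          (fun h => hne (by rw [h]))⟩
  map_rel' := by
    rintro S T hST
    obtain ⟨hne, hdisj, hadj⟩ := hST
    obtain ⟨hne', hdisj', hadj'⟩ := φ.map_rel' ⟨hne, hdisj, hadj⟩
    have hinlr : ∀ (u : Finset β) (v : Finset α),
        Disjoint (u.image (Sum.inl : β → β ⊕ α)) (v.image Sum.inr) := by
      intro u v
      rw [Finset.disjoint_left]
      rintro x hx hx'
      simp only [Finset.mem_image] at hx hx'
      obtain ⟨p, hp, rfl⟩ := hx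
      obtain ⟨q, hq, h⟩ := hx'
      exact Sum.inr_ne_inl h
    have hD : Disjoint (((φ S).val.image Sum.inl) ∪ (S.val.image Sum.inr))
        (((φ T).val.image Sum.inl) ∪ (T.val.image Sum.inr)) := by
      rw [Finset.disjoint_union_left, Finset.disjoint_union_right,
        Finset.disjoint_union_right]
      exact ⟨⟨(Finset.disjoint_image Sum.inl_injective).mpr hdisj', hinlr _ _⟩,
        ⟨(hinlr _ _).symm, (Finset.disjoint_image Sum.inr_injective).mpr hdisj⟩⟩
    refine ⟨?_, hD, ?_⟩
    · intro h
      have hval : ((φ S).val.image Sum.inl) ∪ (S.val.image Sum.inr)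
          = ((φ T).val.image Sum.inl) ∪ (T.val.image Sum.inr) := congrArg Subtype.val h
      have hSne : S.val.Nonempty := by rw [← Finset.card_pos, S.2.1]; exact ha
      obtain ⟨x, hx⟩ := hSne
      have hmem : (Sum.inr x : β ⊕ α)
          ∈ ((φ S).val.image Sum.inl) ∪ (S.val.image Sum.inr) :=
        Finset.mem_union_right _ (Finset.mem_image_of_mem _ hx)
      exact Finset.disjoint_left.mp hD hmem (hval ▸ hmem)
    · rintro x hx y hy
      simp only [Finset.mem_union, Finset.mem_image] at hx hy
      rcases hx with ⟨p, hp, rfl⟩ | ⟨p, hp, rfl⟩ <;> rcases hy with ⟨q, hq, rfl⟩ | ⟨q, hq, rfl⟩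
      · exact hadj' p hp q hq
      · trivial
      · trivial
      · exact hadj p hp q hq

/-- Common denominators: for a semiring family, `F_n/d → F_{m·n}/(m·d)`. -/
theorem fracGraph_common_denominator (F : SemiringFamily.{u}) (n d m : ℕ)
    (hn : 1 ≤ n) (hd : 1 ≤ d) (hm : 1 ≤ m) :
    Nonempty (fracGraph (F.F n) d →g fracGraph (F.F (m * n)) (m * d)) := by
  induction m, hm using Nat.le_induction with
  | base =>
    rw [one_mul, one_mul]
    exact ⟨SimpleGraph.Hom.id⟩
  | succ m hm1 ih =>
    obtain ⟨φ⟩ := ih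
    obtain ⟨ψ⟩ := F.add_hom (m * n) n
    rw [Nat.succ_mul, Nat.succ_mul]
    exact ⟨(fracMap ψ (m * d + d) (le_trans hd (Nat.le_add_left d (m * d)))).comp
      (fracJoinMap hd φ)⟩
end

section
/- Let (F_n) be a linear-like semiring family of graphs. Then for every n ∈ ℕ, the graph F_n contains a clique of size n but no clique of size n + 1; that is, its clique number equals n. -/
open SimpleGraph

universe u v

section Aux
variable {α : Type*} {β : Type*} {G : SimpleGraph α} {H : SimpleGraph β}

/-- A hom from a complete graph upgrades to an embedding. -/
def homTopToEmb {k : ℕ} (f : (⊤ : SimpleGraph (Fin k)) →g G) :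
    (⊤ : SimpleGraph (Fin k)) ↪g G where
  toFun := f
  inj' := by
    intro a b hab
    by_contra h
    have hadj : (⊤ : SimpleGraph (Fin k)).Adj a b := by simpa using h
    exact G.loopless.irrefl _ (hab ▸ f.map_adj hadj)
  map_rel_iff' := by
    intro a b
    constructor
    · intro h
      simp only [top_adj]
      rintro rfl
      exact G.loopless.irrefl _ h
    · intro h
      exact f.map_adj h

lemma hasClique_iff {k : ℕ} :
    Nonempty ((⊤ : SimpleGraph (Fin k)) →g G) ↔ ∃ s : Finset α, G.IsNClique k s := by
  constructor
  · rintro ⟨f⟩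
    have : ¬ G.CliqueFree k := (not_cliqueFree_iff k).2 ⟨(homTopToEmb f).toCopy⟩
    simpa [CliqueFree] using this
  · rintro ⟨s, hs⟩
    have : ¬ G.CliqueFree k := fun h => h s hs
    obtain ⟨e⟩ := (not_cliqueFree_iff k).1 this
    exact ⟨e.toHom⟩

lemma cliqueFree_of_hom {m : ℕ} (f : G →g H) (h : H.CliqueFree m) : G.CliqueFree m := by
  by_contra hc
  obtain ⟨e⟩ := (not_cliqueFree_iff m).1 hc
  have : Nonempty ((⊤ : SimpleGraph (Fin m)) →g H) := ⟨f.comp e.toHom⟩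
  obtain ⟨s, hs⟩ := hasClique_iff.1 this
  exact h s hs

/-- Restrict a hom from a larger complete graph. -/
def homTopMono {a b : ℕ} (hab : a ≤ b) (f : (⊤ : SimpleGraph (Fin b)) →g G) :
    (⊤ : SimpleGraph (Fin a)) →g G where
  toFun := fun i => f (Fin.castLE hab i)
  map_rel' := by
    intro i j hij
    have hne : i ≠ j := by simpa using hij
    have : Fin.castLE hab i ≠ Fin.castLE hab j := fun h => hne (Fin.castLE_injective hab h)
    exact f.map_adj (by simpa using this)

/-- Join of homs from complete graphs. -/
def homTopJoin {a b : ℕ} (f : (⊤ : SimpleGraph (Fin a)) →g G)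
    (g : (⊤ : SimpleGraph (Fin b)) →g H) :
    (⊤ : SimpleGraph (Fin (a + b))) →g graphJoin G H where
  toFun := fun i => Sum.map f g (finSumFinEquiv.symm i)
  map_rel' := by
    intro i j hij
    have hij' : i ≠ j := by simpa using hij
    have hne : finSumFinEquiv.symm i ≠ finSumFinEquiv.symm j :=
      fun h => hij' (finSumFinEquiv.symm.injective h)
    rcases hx : finSumFinEquiv.symm i with x | x <;> rcases hy : finSumFinEquiv.symm j with y | y <;>
      simp only [hx, hy, Sum.map_inl, Sum.map_inr]
    · have : x ≠ y := by rintro rfl; exact hne (hx.trans hy.symm)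
      exact f.map_adj (by simpa using this)
    · exact trivial
    · exact trivial
    · have : x ≠ y := by rintro rfl; exact hne (hx.trans hy.symm)
      exact g.map_adj (by simpa using this)

end Aux

/-- `F_n` contains a complete graph on `n` vertices. -/
lemma semiring_lower (F : SemiringFamily.{u}) (n : ℕ) :
    Nonempty ((⊤ : SimpleGraph (Fin n)) →g F.F n) := by
  induction n with
  | zero => exact ⟨⟨Fin.elim0, fun {a} => a.elim0⟩⟩
  | succ n ih =>
    obtain ⟨f⟩ := ih
    obtain ⟨v⟩ := F.nonempty_one
    have g : (⊤ : SimpleGraph (Fin 1)) →g F.F 1 :=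
      ⟨fun _ => v, by intro i j hij; exact absurd (Subsingleton.elim i j) (by simpa using hij)⟩
    obtain ⟨h⟩ := F.add_hom n 1
    exact ⟨h.comp ((homTopJoin f g))⟩

lemma univ_isFlat {α : Type*} (G : SimpleGraph α) : IsFlat G (Set.univ : Set α) := by
  have h1 : perp G (Set.univ : Set α) = ∅ := by
    ext v
    simp only [perp, Set.mem_setOf_eq, Set.mem_empty_iff_false, iff_false, not_forall]
    exact ⟨v, Set.mem_univ v, G.loopless.irrefl v⟩
  rw [IsFlat, h1]
  ext v
  simp [perp]

/-- For a linear-like semiring family, `F_n` has clique number exactly `n`. -/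
theorem linearLike_cliqueNum (F : LinearLikeFamily.{u}) (n : ℕ) :
    (∃ s : Finset (F.V n), (F.F n).IsNClique n s) ∧
      ∀ s : Finset (F.V n), ¬ (F.F n).IsNClique (n + 1) s := by
  obtain ⟨k, ⟨s, hs⟩, hfree, ⟨f⟩, ⟨g⟩⟩ := F.linearLike n Set.univ (univ_isFlat (F.F n))
  set G := F.F n with hG
  have iso := induceUnivIso (F.F n)
  -- `F n` has a k-clique
  have hkn : Nonempty ((⊤ : SimpleGraph (Fin k)) →g F.F n) := by
    obtain ⟨h⟩ := hasClique_iff.2 ⟨s, hs⟩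
    exact ⟨iso.toHom.comp h⟩
  -- `F n` is (k+1)-clique-free
  have hfree' : ((F.F n).induce Set.univ).CliqueFree (k + 1) := hfree
  have hfreeN : (F.F n).CliqueFree (k + 1) := cliqueFree_of_hom iso.symm.toHom hfree'
  -- n ≤ k
  have hnk : n ≤ k := by
    by_contra h
    push_neg at h
    obtain ⟨t⟩ := semiring_lower F.toSemiringFamily n
    exact absurd (hasClique_iff.1 ⟨homTopMono h t⟩) (by simpa [CliqueFree] using hfreeN)
  -- k ≤ n
  have hkn' : k ≤ n := by
    by_contra h
    push_neg at h
    -- F k is (k+1)-clique-free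
    have hfk : (F.F k).CliqueFree (k + 1) := cliqueFree_of_hom g hfree'
    -- but F k has a clique of size k + (k - n) ≥ k + 1
    obtain ⟨t1⟩ := hkn
    obtain ⟨t2⟩ := semiring_lower F.toSemiringFamily (k - n)
    obtain ⟨hj⟩ := F.add_hom n (k - n)
    have heq : n + (k - n) = k := by omega
    have hbig : Nonempty ((⊤ : SimpleGraph (Fin (k + (k - n)))) →g F.F k) := by
      have := hj.comp (homTopJoin t1 t2)
      rw [heq] at this
      exact ⟨this⟩
    obtain ⟨hb⟩ := hbig
    have hle : k + 1 ≤ k + (k - n) := by omega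
    exact absurd (hasClique_iff.1 ⟨homTopMono hle hb⟩) (by simpa [CliqueFree] using hfk)
  have : k = n := le_antisymm hkn' hnk
  subst this
  refine ⟨hasClique_iff.1 hkn, fun t ht => hfreeN t ht⟩
end

section
/- Let (F_n) be a linear-like semiring family of graphs, let G and H be simple graphs, and suppose there exists a graph homomorphism G + H → F_n. Then there exist k, ℓ ∈ ℕ with k + ℓ = n such that there exist graph homomorphisms G → F_k and H → F_ℓ. -/
open SimpleGraph

universe u v

universe w

section CliqueAux
variable {α : Type*} {β : Type*} {G : SimpleGraph α} {H : SimpleGraph β}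

lemma exists_isNClique_of_hom (f : G →g H) {k : ℕ} {s : Finset α}
    (hs : G.IsNClique k s) : ∃ t : Finset β, H.IsNClique k t := by
  classical
  refine ⟨s.image f, ⟨?_, ?_⟩⟩
  · rintro x hx y hy hne
    simp only [Finset.coe_image, Set.mem_image, Finset.mem_coe] at hx hy
    obtain ⟨a, ha, rfl⟩ := hx
    obtain ⟨b, hb, rfl⟩ := hy
    have hab : a ≠ b := by rintro rfl; exact hne rfl
    exact f.map_adj (hs.1 (Finset.mem_coe.mpr ha) (Finset.mem_coe.mpr hb) hab)
  · rw [Finset.card_image_of_injOn, hs.2]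
    intro a ha b hb hfab
    by_contra hab
    exact (f.map_adj (hs.1 (Finset.mem_coe.mpr ha) (Finset.mem_coe.mpr hb) hab)).ne hfab

lemma not_cliqueFree_of_hom (f : G →g H) {k : ℕ} (h : ¬ G.CliqueFree k) :
    ¬ H.CliqueFree k := by
  simp only [CliqueFree, not_forall, not_not] at h ⊢
  obtain ⟨s, hs⟩ := h
  exact exists_isNClique_of_hom f hs

lemma join_isNClique {a b : ℕ} {s : Finset α} {t : Finset β}
    (hs : G.IsNClique a s) (ht : H.IsNClique b t) :
    ∃ u : Finset (α ⊕ β), (graphJoin G H).IsNClique (a + b) u := by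
  classical
  refine ⟨s.image Sum.inl ∪ t.image Sum.inr, ⟨?_, ?_⟩⟩
  · rintro x hx y hy hne
    simp only [Finset.coe_union, Set.mem_union, Finset.coe_image, Set.mem_image,
      Finset.mem_coe] at hx hy
    rcases hx with ⟨p, hp, rfl⟩ | ⟨p, hp, rfl⟩ <;>
      rcases hy with ⟨q, hq, rfl⟩ | ⟨q, hq, rfl⟩
    · have hpq : p ≠ q := by rintro rfl; exact hne rfl
      exact hs.1 (Finset.mem_coe.mpr hp) (Finset.mem_coe.mpr hq) hpq
    · trivial
    · trivial
    · have hpq : p ≠ q := by rintro rfl; exact hne rfl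
      exact ht.1 (Finset.mem_coe.mpr hp) (Finset.mem_coe.mpr hq) hpq
  · rw [Finset.card_union_of_disjoint, Finset.card_image_of_injective _ Sum.inl_injective,
      Finset.card_image_of_injective _ Sum.inr_injective, hs.2, ht.2]
    simp [Finset.disjoint_left]

lemma induce_clique_lift {S : Set α} {k : ℕ} {s : Finset S}
    (h : (G.induce S).IsNClique k s) :
    ∃ u : Finset α, G.IsNClique k u ∧ ↑u ⊆ S := by
  classical
  refine ⟨s.image Subtype.val, ⟨?_, ?_⟩, ?_⟩
  · rintro x hx y hy hne
    simp only [Finset.coe_image, Set.mem_image, Finset.mem_coe] at hx hy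
    obtain ⟨⟨a, haS⟩, ha, rfl⟩ := hx
    obtain ⟨⟨b, hbS⟩, hb, rfl⟩ := hy
    have : (⟨a, haS⟩ : S) ≠ ⟨b, hbS⟩ := by
      intro he; exact hne (congrArg Subtype.val he)
    exact h.1 (Finset.mem_coe.mpr ha) (Finset.mem_coe.mpr hb) this
  · rw [Finset.card_image_of_injective _ Subtype.val_injective, h.2]
  · intro x hx
    simp only [Finset.coe_image, Set.mem_image, Finset.mem_coe] at hx
    obtain ⟨⟨a, haS⟩, _, rfl⟩ := hx
    exact haS

end CliqueAux
section PerpAux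
variable {α : Type*} (G : SimpleGraph α)

lemma subset_perp_perp (S : Set α) : S ⊆ perp G (perp G S) :=
  fun a ha v hv => ((hv a ha)).symm

lemma perp_anti {S T : Set α} (h : S ⊆ T) : perp G T ⊆ perp G S :=
  fun v hv s hs => hv s (h hs)

lemma isFlat_perp (S : Set α) : IsFlat G (perp G S) :=
  Set.Subset.antisymm (perp_anti G (subset_perp_perp G S)) (subset_perp_perp G (perp G S))

lemma isFlat_univ : IsFlat G (Set.univ : Set α) := by
  have h1 : perp G (Set.univ : Set α) = ∅ := by
    ext v
    simp only [perp, Set.mem_setOf_eq, Set.mem_empty_iff_false, iff_false, not_forall]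
    exact ⟨v, Set.mem_univ v, G.loopless.irrefl v⟩
  rw [IsFlat, h1]
  ext v
  simp [perp]

end PerpAux

section FamilyAux

def homInl {α β : Type*} (G : SimpleGraph α) (H : SimpleGraph β) :
    G →g graphJoin G H :=
  ⟨Sum.inl, fun h => h⟩

lemma hom_of_le (F : SemiringFamily.{u}) {n m : ℕ} (h : n ≤ m) :
    Nonempty (F.F n →g F.F m) := by
  obtain ⟨d, rfl⟩ := Nat.exists_eq_add_of_le h
  obtain ⟨ψ⟩ := F.add_hom n d
  exact ⟨ψ.comp (homInl _ _)⟩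

lemma notCF_join (F : SemiringFamily.{u}) {n m a b : ℕ}
    (hn : ¬ (F.F n).CliqueFree a) (hm : ¬ (F.F m).CliqueFree b) :
    ¬ (F.F (n + m)).CliqueFree (a + b) := by
  simp only [SimpleGraph.CliqueFree, not_forall, not_not] at hn hm ⊢
  obtain ⟨s, hs⟩ := hn
  obtain ⟨t, ht⟩ := hm
  obtain ⟨u, hu⟩ := join_isNClique hs ht
  obtain ⟨ψ⟩ := F.add_hom n m
  exact exists_isNClique_of_hom ψ hu

lemma not_cliqueFree_self (F : SemiringFamily.{u}) (n : ℕ) :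
    ¬ (F.F n).CliqueFree n := by
  induction n with
  | zero =>
    intro hcf
    exact hcf ∅ ⟨by simp [SimpleGraph.IsClique], by simp⟩
  | succ a ih =>
    have h1 : ¬ (F.F 1).CliqueFree 1 := by
      intro hcf
      obtain ⟨v⟩ := F.nonempty_one
      exact hcf {v} ⟨by simp [SimpleGraph.IsClique], by simp⟩
    exact notCF_join F ih h1

lemma cliqueFree_succ (F : LinearLikeFamily.{u}) (n : ℕ) :
    (F.F n).CliqueFree (n + 1) := by
  obtain ⟨k, ⟨s, hs⟩, hfree, ⟨f⟩, ⟨g⟩⟩ := F.linearLike n Set.univ (isFlat_univ _)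
  set e := SimpleGraph.induceUnivIso (F.F n) with he
  -- clique of size k in F n
  obtain ⟨s', hs'⟩ := exists_isNClique_of_hom e.toHom hs
  -- CliqueFree (k+1) for F n
  have hcf : (F.F n).CliqueFree (k + 1) := by
    intro t ht
    obtain ⟨t', ht'⟩ := exists_isNClique_of_hom e.symm.toHom ht
    exact hfree t' ht'
  -- n ≤ k
  have hnk : n ≤ k := by
    by_contra hlt
    push_neg at hlt
    exact not_cliqueFree_self F.toSemiringFamily n (hcf.mono (by omega))
  -- k ≤ n
  have hkn : k ≤ n := by
    by_contra hlt
    push_neg at hlt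
    set t := k - n with htdef
    have ht1 : 1 ≤ t := by omega
    have hknt : n + t = k := by omega
    -- clique of size k in F n exists: ¬CF k (F n)
    have hFnk : ¬ (F.F n).CliqueFree k := by
      simp only [SimpleGraph.CliqueFree, not_forall, not_not]
      exact ⟨s', hs'⟩
    have hFtt : ¬ (F.F t).CliqueFree t := not_cliqueFree_self F.toSemiringFamily t
    have hbig : ¬ (F.F (n + t)).CliqueFree (k + t) := notCF_join F.toSemiringFamily hFnk hFtt
    rw [hknt] at hbig
    -- map back to F n along g then e
    have hback : ¬ (F.F n).CliqueFree (k + t) :=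
      not_cliqueFree_of_hom (e.toHom.comp g) hbig
    exact hback (hcf.mono (by omega))
  have : k = n := le_antisymm hkn hnk
  subst this
  exact hcf

/-- Join decomposition: if `G + H → F_n` for a linear-like family, then `n = k + ℓ`
with `G → F_k` and `H → F_ℓ`. -/
theorem linearLike_join_decomposition (F : LinearLikeFamily.{u}) {α : Type v} {β : Type w}
    (G : SimpleGraph α) (H : SimpleGraph β) (n : ℕ)
    (h : Nonempty (graphJoin G H →g F.F n)) :
    ∃ k l : ℕ, k + l = n ∧ Nonempty (G →g F.F k) ∧ Nonempty (H →g F.F l) := by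
  classical
  obtain ⟨φ⟩ := h
  set A : Set (F.V n) := Set.range (fun a => φ (Sum.inl a)) with hA
  set T : Set (F.V n) := perp (F.F n) A with hT
  set S : Set (F.V n) := perp (F.F n) T with hS
  obtain ⟨k, ⟨s₁, hs₁⟩, hkfree, ⟨fk⟩, ⟨gk⟩⟩ :=
    F.linearLike n S (isFlat_perp _ _)
  obtain ⟨l, ⟨s₂, hs₂⟩, hlfree, ⟨fl⟩, ⟨gl⟩⟩ :=
    F.linearLike n T (isFlat_perp _ _)
  -- G maps into induce S
  have hGS : ∀ a : α, φ (Sum.inl a) ∈ S := fun a =>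
    subset_perp_perp (F.F n) A ⟨a, rfl⟩
  have homG : G →g (F.F n).induce S :=
    ⟨fun a => ⟨φ (Sum.inl a), hGS a⟩, fun hadj => φ.map_adj hadj⟩
  -- H maps into induce T
  have hHT : ∀ b : β, φ (Sum.inr b) ∈ T := by
    intro b x hx
    obtain ⟨a, rfl⟩ := hx
    exact (φ.map_adj (show (graphJoin G H).Adj (Sum.inl a) (Sum.inr b) from trivial)).symm
  have homH : H →g (F.F n).induce T :=
    ⟨fun b => ⟨φ (Sum.inr b), hHT b⟩, fun hadj => φ.map_adj hadj⟩
  -- lift the cliques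
  obtain ⟨u₁, hu₁, hu₁S⟩ := induce_clique_lift hs₁
  obtain ⟨u₂, hu₂, hu₂T⟩ := induce_clique_lift hs₂
  -- cross adjacency and disjointness
  have cross : ∀ x ∈ u₁, ∀ y ∈ u₂, (F.F n).Adj x y := fun x hx y hy =>
    hu₁S (Finset.mem_coe.mpr hx) y (hu₂T (Finset.mem_coe.mpr hy))
  have hdisj : Disjoint u₁ u₂ := by
    rw [Finset.disjoint_left]
    intro x hx hx2
    exact (F.F n).loopless.irrefl x (cross x hx x hx2)
  -- the combined clique of size k + l
  have hbig : (F.F n).IsNClique (k + l) (u₁ ∪ u₂) := by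
    constructor
    · rintro x hx y hy hne
      simp only [Finset.coe_union, Set.mem_union, Finset.mem_coe] at hx hy
      rcases hx with hx | hx <;> rcases hy with hy | hy
      · exact hu₁.1 (Finset.mem_coe.mpr hx) (Finset.mem_coe.mpr hy) hne
      · exact cross x hx y hy
      · exact (cross y hy x hx).symm
      · exact hu₂.1 (Finset.mem_coe.mpr hx) (Finset.mem_coe.mpr hy) hne
    · rw [Finset.card_union_of_disjoint hdisj, hu₁.2, hu₂.2]
  -- k + l ≤ n
  have hkl : k + l ≤ n := by
    by_contra hlt
    push_neg at hlt
    exact (cliqueFree_succ F n).mono (by omega) _ hbig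
  -- conclude
  refine ⟨k, n - k, by omega, ⟨fk.comp homG⟩, ?_⟩
  obtain ⟨ψ⟩ := hom_of_le F.toSemiringFamily (show l ≤ n - k by omega)
  exact ⟨ψ.comp (fl.comp homH)⟩
end FamilyAux
end
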